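/- Let G be a graph with maximum degree Δ(G) and domination number γ(G), let π be a secure coalition partition of G, and let Z ∈ π. Then the number of sets of π that form a secure coalition with Z is at most max{Δ(G)+1, n−γ(G)}. -/

import Mathlib

namespace SecCoal

/-- `D` is a dominating set of `G`. -/
def IsDominating {V : Type*} (G : SimpleGraph V) (D : Set V) : Prop :=
  ∀ v ∉ D, ∃ u ∈ D, G.Adj u v

/-- `S` is a secure dominating set of `G`. -/
def IsSecureDominating {V : Type*} (G : SimpleGraph V) (S : Set V) : Prop :=
  IsDominating G S ∧
    ∀ u ∉ S, ∃ v ∈ S, G.Adj v u ∧ IsDominating G ((S \ {v}) ∪ {u})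

/-- Degree of a vertex. -/
noncomputable def deg {V : Type*} (G : SimpleGraph V) (v : V) : ℕ :=
  (G.neighborSet v).ncard

/-- Minimum degree. -/
noncomputable def minDeg {V : Type*} (G : SimpleGraph V) : ℕ :=
  sInf (Set.range (deg G))

/-- Maximum degree. -/
noncomputable def maxDeg {V : Type*} (G : SimpleGraph V) : ℕ :=
  sSup (Set.range (deg G))

/-- `π` is a secure coalition partition of `G`. -/
def IsSecPartition {V : Type*} (G : SimpleGraph V) (π : Finset (Set V)) : Prop :=
  Setoid.IsPartition (↑π : Set (Set V)) ∧
    ∀ A ∈ π,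
      (∃ v, A = {v} ∧ deg G v = Nat.card V - 1 ∧ IsSecureDominating G A) ∨
      (¬ IsSecureDominating G A ∧
        ∃ B ∈ π, B ≠ A ∧ IsSecureDominating G (A ∪ B))

/-- The secure coalition number of `G`. -/
noncomputable def SEC {V : Type*} (G : SimpleGraph V) : ℕ :=
  sSup {k | ∃ π : Finset (Set V), IsSecPartition G π ∧ π.card = k}

/-- Two disjoint sets form a secure coalition. -/
def FormsSecCoalition {V : Type*} (G : SimpleGraph V) (A B : Set V) : Prop :=
  Disjoint A B ∧ ¬ IsSecureDominating G A ∧ ¬ IsSecureDominating G B ∧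
    IsSecureDominating G (A ∪ B)

/-- The domination number of `G`. -/
noncomputable def gammaDom {V : Type*} (G : SimpleGraph V) : ℕ :=
  sInf {k | ∃ D : Set V, IsDominating G D ∧ D.ncard = k}

/-- The secure domination number of `G`. -/
noncomputable def secDomNum {V : Type*} (G : SimpleGraph V) : ℕ :=
  sInf {k | ∃ S : Set V, IsSecureDominating G S ∧ S.ncard = k}

/-- `π` is a coalition partition (w.r.t. domination) of `G`. -/
def IsCoalitionPartition {V : Type*} (G : SimpleGraph V) (π : Finset (Set V)) : Prop :=
  Setoid.IsPartition (↑π : Set (Set V)) ∧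
    ∀ A ∈ π,
      (∃ v, A = {v} ∧ IsDominating G A) ∨
      (¬ IsDominating G A ∧ ∃ B ∈ π, B ≠ A ∧ IsDominating G (A ∪ B))

/-- The coalition number of `G`. -/
noncomputable def CNum {V : Type*} (G : SimpleGraph V) : ℕ :=
  sSup {k | ∃ π : Finset (Set V), IsCoalitionPartition G π ∧ π.card = k}

/-- The secure coalition graph of `G` w.r.t. a partition `π`. -/
def SCG {V : Type*} (G : SimpleGraph V) (π : Finset (Set V)) :
    SimpleGraph {A : Set V // A ∈ π} where
  Adj A B := FormsSecCoalition G A.1 B.1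
  symm := ⟨by
    rintro A B ⟨hd, h1, h2, h3⟩
    exact ⟨hd.symm, h2, h1, by rwa [Set.union_comm]⟩⟩
  loopless := ⟨by
    rintro A ⟨hd, h1, h2, h3⟩
    exact h1 (by simpa using h3)⟩

end SecCoal

open SecCoal
theorem stmt5 {V : Type*} [Fintype V] (G : SimpleGraph V)
    (π : Finset (Set V)) (Z : Set V)
    (hπ : IsSecPartition G π) (hZ : Z ∈ π) :
    {A ∈ (↑π : Set (Set V)) | FormsSecCoalition G Z A}.ncard ≤
      max (maxDeg G + 1) (Fintype.card V - gammaDom G) := by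
  classical
  set S := {A ∈ (↑π : Set (Set V)) | FormsSecCoalition G Z A} with hS
  rcases S.eq_empty_or_nonempty with h | ⟨A0, hA0⟩
  · simp [h]
  obtain ⟨hpart, -⟩ := hπ
  have hZne : Z.Nonempty := by
    rw [Set.nonempty_iff_ne_empty]
    rintro rfl
    exact hpart.1 (by exact_mod_cast hZ)
  have : Nonempty V := ⟨hZne.some⟩
  have hdisj : ∀ A ∈ S, ∀ B ∈ S, ∀ x, x ∈ A → x ∈ B → A = B := by
    intro A hA B hB x hxA hxB
    obtain ⟨C, -, hCuniq⟩ := hpart.2 x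
    rw [hCuniq A ⟨hA.1, hxA⟩, hCuniq B ⟨hB.1, hxB⟩]
  by_cases hdom : IsDominating G Z
  · -- Z dominates: partners are nonempty pairwise-disjoint subsets of Zᶜ
    have hmap : ∀ A ∈ S, A.Nonempty := by
      intro A hA
      rw [Set.nonempty_iff_ne_empty]
      rintro rfl
      exact hpart.1 (by exact_mod_cast hA.1)
    set f : Set V → V := fun A => if h : A.Nonempty then h.some else Classical.arbitrary V
      with hf
    have hfm : ∀ A ∈ S, f A ∈ A := by
      intro A hA
      simp only [hf, dif_pos (hmap A hA)]
      exact (hmap A hA).some_mem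
    have key : S.ncard ≤ (Zᶜ).ncard := by
      apply Set.ncard_le_ncard_of_injOn f
      · intro A hA
        have := hA.2.1
        exact fun hZmem => (Set.disjoint_left.mp this hZmem) (hfm A hA)
      · intro A hA B hB hAB
        exact hdisj A hA B hB (f A) (hfm A hA) (hAB ▸ hfm B hB)
    have hγ : gammaDom G ≤ Z.ncard := Nat.sInf_le ⟨Z, hdom, rfl⟩
    have hcompl : (Zᶜ).ncard = Fintype.card V - Z.ncard := by
      have := Z.ncard_add_ncard_compl
      rw [Nat.card_eq_fintype_card] at this
      omega
    refine le_trans key (le_trans ?_ (le_max_right _ _))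
    rw [hcompl]
    exact Nat.sub_le_sub_left hγ _
  · -- Z does not dominate: pick undominated v
    simp only [IsDominating, not_forall] at hdom
    obtain ⟨v, hvZ, hv⟩ := hdom
    push_neg at hv
    set t : Set V := insert v (G.neighborSet v) with ht
    have hmap : ∀ A ∈ S, (A ∩ t).Nonempty := by
      intro A hA
      have hsec : IsDominating G (Z ∪ A) := hA.2.2.2.2.1
      by_cases hvA : v ∈ Z ∪ A
      · rcases hvA with hvA | hvA
        · exact absurd hvA hvZ
        · exact ⟨v, hvA, Set.mem_insert _ _⟩
      · obtain ⟨u, hu, hadj⟩ := hsec v hvA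
        rcases hu with hu | hu
        · exact absurd hadj (hv u hu)
        · exact ⟨u, hu, Set.mem_insert_of_mem _ (by simpa using hadj.symm)⟩
    set f : Set V → V := fun A => if h : (A ∩ t).Nonempty then h.some else Classical.arbitrary V
      with hf
    have hfm : ∀ A ∈ S, f A ∈ A ∩ t := by
      intro A hA
      simp only [hf, dif_pos (hmap A hA)]
      exact (hmap A hA).some_mem
    have key : S.ncard ≤ t.ncard := by
      apply Set.ncard_le_ncard_of_injOn f
      · exact fun A hA => (hfm A hA).2
      · intro A hA B hB hAB
        exact hdisj A hA B hB (f A) (hfm A hA).1 (hAB ▸ (hfm B hB).1)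
    have hdeg : t.ncard = deg G v + 1 := by
      rw [ht, Set.ncard_insert_of_notMem (by simp) (Set.toFinite _)]
      rfl
    have hmax : deg G v ≤ maxDeg G :=
      le_csSup (Set.Finite.bddAbove (Set.finite_range _)) ⟨v, rfl⟩
    refine le_trans key (le_trans ?_ (le_max_left _ _))
    omega
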